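/- For every real λ > 0 and every s ∈ (0,1), λ^{-s} = (2 sin(πs)/π) ∫_{-∞}^{+∞} e^{2sy} (1 + e^{2y} λ)^{-1} dy. -/

import Mathlib

open Real MeasureTheory

lemma beta_Ioo (s : ℝ) (hs : s ∈ Set.Ioo (0:ℝ) 1) :
    ∫ t in Set.Ioo (0:ℝ) 1, t ^ (s-1) * (1-t) ^ (-s) = Real.pi / Real.sin (Real.pi * s) := by
  have hs0 := hs.1; have hs1 := hs.2
  have h1 : Complex.betaIntegral s (1 - s) = ((Real.pi / Real.sin (Real.pi * s) : ℝ) : ℂ) := by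
    have := Complex.Gamma_mul_Gamma_eq_betaIntegral (s := (s:ℂ)) (t := 1 - (s:ℂ))
      (by simpa using hs0) (by simp [Complex.sub_re]; linarith)
    rw [show (s:ℂ) + (1 - (s:ℂ)) = 1 by ring, Complex.Gamma_one, one_mul] at this
    rw [← this]
    have h2 : (1 : ℂ) - (s:ℂ) = ((1 - s : ℝ) : ℂ) := by push_cast; ring
    rw [h2, Complex.Gamma_ofReal, Complex.Gamma_ofReal, ← Complex.ofReal_mul,
      Real.Gamma_mul_Gamma_one_sub]
  have h2 : Complex.betaIntegral s (1 - s)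
      = ((∫ x in (0:ℝ)..1, x ^ (s-1) * (1-x) ^ (-s) : ℝ) : ℂ) := by
    rw [Complex.betaIntegral, ← intervalIntegral.integral_ofReal]
    apply intervalIntegral.integral_congr
    intro x hx
    rw [Set.uIcc_of_le (by norm_num)] at hx
    have hx0 : (0:ℝ) ≤ x := hx.1
    have hx1 : (0:ℝ) ≤ 1 - x := by linarith [hx.2]
    beta_reduce
    rw [show ((s:ℂ) - 1) = ((s-1:ℝ):ℂ) by push_cast; ring,
      show ((1:ℂ) - (s:ℂ) - 1) = ((-s:ℝ):ℂ) by push_cast; ring,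
      show ((1:ℂ) - (x:ℂ)) = ((1-x:ℝ):ℂ) by push_cast; ring,
      ← Complex.ofReal_cpow hx0, ← Complex.ofReal_cpow hx1, ← Complex.ofReal_mul]
  have h3 : (∫ x in (0:ℝ)..1, x ^ (s-1) * (1-x) ^ (-s) : ℝ)
      = Real.pi / Real.sin (Real.pi * s) := by
    exact_mod_cast h2.symm.trans h1
  rw [← h3, intervalIntegral.integral_of_le zero_le_one,
    MeasureTheory.integral_Ioc_eq_integral_Ioo]

theorem balakrishnan_formula (lam s : ℝ) (hlam : 0 < lam) (hs : s ∈ Set.Ioo (0:ℝ) 1) :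
    lam ^ (-s) =
      (2 * Real.sin (Real.pi * s) / Real.pi) *
        ∫ y : ℝ, Real.exp (2 * s * y) * (1 + Real.exp (2 * y) * lam)⁻¹ := by
  have hs0 := hs.1; have hs1 := hs.2
  set f : ℝ → ℝ := fun y => 1 - (1 + Real.exp (2*y) * lam)⁻¹ with hf
  have hApos : ∀ y : ℝ, (0:ℝ) < 1 + Real.exp (2*y) * lam := fun y => by positivity
  have hA1 : ∀ y : ℝ, (1:ℝ) < 1 + Real.exp (2*y) * lam := fun y => by
    nlinarith [Real.exp_pos (2*y)]
  -- derivative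
  have hderiv : ∀ y : ℝ, HasDerivAt f (2 * Real.exp (2*y) * lam / (1 + Real.exp (2*y) * lam)^2) y := by
    intro y
    have h0 : HasDerivAt (fun y : ℝ => 2*y) 2 y := by simpa using (hasDerivAt_id y).const_mul 2
    have h1 : HasDerivAt (fun y : ℝ => 1 + Real.exp (2*y) * lam) (Real.exp (2*y) * 2 * lam) y :=
      (h0.exp.mul_const lam).const_add 1
    have h2 := (h1.inv (hApos y).ne').const_sub 1
    exact h2.congr_deriv (by ring)
  -- injectivity
  have hinj : Function.Injective f := by
    intro a b hab
    have h1 : (1 + Real.exp (2*a) * lam)⁻¹ = (1 + Real.exp (2*b) * lam)⁻¹ := by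
      simpa [hf, sub_right_inj] using hab
    have h2 := inv_injective h1
    have h3 : Real.exp (2*a) * lam = Real.exp (2*b) * lam := by linarith
    have h4 := mul_right_cancel₀ hlam.ne' h3
    have := Real.exp_injective h4
    linarith
  -- range
  have hrange : f '' Set.univ = Set.Ioo (0:ℝ) 1 := by
    rw [Set.image_univ]
    ext t
    constructor
    · rintro ⟨y, rfl⟩
      have h1 := hA1 y
      have h2 : (1 + Real.exp (2*y) * lam)⁻¹ < 1 := by
        rw [inv_lt_one_iff₀]; right; exact h1
      have h3 : (0:ℝ) < (1 + Real.exp (2*y) * lam)⁻¹ := by positivity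
      exact ⟨by simp only [hf]; linarith, by simp only [hf]; linarith⟩
    · rintro ⟨ht0, ht1⟩
      refine ⟨Real.log (t / ((1 - t) * lam)) / 2, ?_⟩
      have h1t : (0:ℝ) < 1 - t := by linarith
      have harg : (0:ℝ) < t / ((1 - t) * lam) := by positivity
      simp only [hf]
      rw [show 2 * (Real.log (t / ((1 - t) * lam)) / 2) = Real.log (t / ((1-t)*lam)) by ring,
        Real.exp_log harg]
      have hx : 1 + t / ((1-t)*lam) * lam = (1-t)⁻¹ := by field_simp; ring
      rw [hx, inv_inv]; ring
  -- change of variables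
  have hcov := MeasureTheory.integral_image_eq_integral_abs_deriv_smul MeasurableSet.univ
    (fun x _ => (hderiv x).hasDerivWithinAt) hinj.injOn
    (fun t => t ^ (s-1) * (1-t) ^ (-s))
  rw [hrange, MeasureTheory.setIntegral_univ] at hcov
  -- pointwise simplification of transformed integrand
  have hpt : ∀ y : ℝ,
      |2 * Real.exp (2*y) * lam / (1 + Real.exp (2*y) * lam)^2| •
        ((f y) ^ (s-1) * (1 - f y) ^ (-s))
      = (2 * lam ^ s) * (Real.exp (2 * s * y) * (1 + Real.exp (2*y) * lam)⁻¹) := by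
    intro y
    set A := 1 + Real.exp (2*y) * lam with hAdef
    set B := Real.exp (2*y) * lam with hBdef
    have hA : (0:ℝ) < A := hApos y
    have hB : (0:ℝ) < B := by positivity
    have h1fy : 1 - f y = A⁻¹ := by simp only [hf]; ring
    have hfy : f y = B / A := by
      simp only [hf, ← hAdef, ← hBdef]
      field_simp
      rw [hAdef]; ring
    rw [smul_eq_mul, h1fy, hfy, abs_of_pos (by positivity),
      Real.div_rpow hB.le hA.le, Real.inv_rpow hA.le, Real.rpow_neg hA.le, inv_inv]
    have hBs : B * B ^ (s-1) = B ^ s := by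
      rw [← Real.rpow_one_add' hB.le (ne_of_gt (by linarith : (0:ℝ) < 1 + (s-1)))]
      norm_num
    have hAs : A ^ s / A ^ (s-1) = A := by
      rw [← Real.rpow_sub hA]
      norm_num
    have hBexp : B ^ s = Real.exp (2*s*y) * lam ^ s := by
      rw [hBdef, Real.mul_rpow (Real.exp_nonneg _) hlam.le, ← Real.exp_mul]
      ring_nf
    calc 2 * Real.exp (2*y) * lam / A ^ 2 * (B ^ (s-1) / A ^ (s-1) * A ^ s)
        = 2 * (B * B ^ (s-1)) * (A ^ s / A ^ (s-1)) / A ^ 2 := by rw [hBdef]; ring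
      _ = 2 * B ^ s * A / A ^ 2 := by rw [hBs, hAs]
      _ = 2 * B ^ s / A := by
          rw [pow_two]
          field_simp
      _ = 2 * lam ^ s * (Real.exp (2*s*y) * A⁻¹) := by rw [hBexp]; field_simp
  simp_rw [hpt] at hcov
  rw [MeasureTheory.integral_const_mul, beta_Ioo s hs] at hcov
  -- final algebra
  have hsin : 0 < Real.sin (Real.pi * s) :=
    Real.sin_pos_of_pos_of_lt_pi (by positivity) (by nlinarith [Real.pi_pos])
  have hls : (0:ℝ) < lam ^ s := Real.rpow_pos_of_pos hlam s
  rw [Real.rpow_neg hlam.le]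
  have hpi := Real.pi_pos
  field_simp at hcov ⊢
  simp only [mul_comm lam] at ⊢
  linarith [hcov]
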